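/- Let G be a finite simple graph, let x and y be vertices, let P be an xy-fiber of G, let H be a connected component of G − V(P), and let k be the number of attachment points of H on P. Then there exists an independent set A of G with A ⊆ V(P) − {x, y}, |A| ≥ k − 1, such that no edge of G joins a vertex of A and a vertex of H. -/

import Mathlib

open SimpleGraph

namespace SimpleGraph.Walk
variable {V : Type} {G : SimpleGraph V}

/-- Take the first `n` darts of a walk. -/
def wtake : ∀ {u v : V} (p : G.Walk u v) (n : ℕ), G.Walk u (p.getVert n)
  | _, _, .nil, _ => .nil
  | _, _, .cons _ _, 0 => .nil
  | _, _, .cons h q, n+1 => .cons h (wtake q n)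

/-- Drop the first `n` darts of a walk. -/
def wdrop : ∀ {u v : V} (p : G.Walk u v) (n : ℕ), G.Walk (p.getVert n) v
  | _, _, .nil, _ => .nil
  | _, _, .cons h q, 0 => .cons h q
  | _, _, .cons _ q, n+1 => wdrop q n

lemma getVert_wdrop {u v : V} (p : G.Walk u v) (n m : ℕ) :
    (p.wdrop n).getVert m = p.getVert (n + m) := by
  induction p generalizing n with
  | nil => rfl
  | cons h q ih =>
    cases n with
    | zero => simp [wdrop]; rfl
    | succ n =>
      rw [wdrop]; refine (ih n).trans ?_
      have : n + 1 + m = (n + m) + 1 := by omega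
      rw [this, Walk.getVert_cons_succ]

lemma length_wtake {u v : V} (p : G.Walk u v) {n : ℕ} (h : n ≤ p.length) :
    (p.wtake n).length = n := by
  induction p generalizing n with
  | nil => simp at h; simp [h, wtake]
  | cons hadj q ih =>
    cases n with
    | zero => rfl
    | succ n =>
      simp only [Walk.length_cons] at h
      simp only [wtake, Walk.length_cons]
      exact congrArg (· + 1) (ih (n := n) (by omega))

lemma length_wdrop {u v : V} (p : G.Walk u v) (n : ℕ) :
    (p.wdrop n).length = p.length - n := by
  induction p generalizing n with
  | nil => simp [wdrop]
  | cons hadj q ih =>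
    cases n with
    | zero => simp [wdrop]; rfl
    | succ n => simp [wdrop, ih]

lemma support_wtake {u v : V} (p : G.Walk u v) {n : ℕ} (h : n ≤ p.length) :
    (p.wtake n).support = p.support.take (n+1) := by
  induction p generalizing n with
  | nil => simp at h; simp [h, wtake]
  | cons hadj q ih =>
    cases n with
    | zero => simp [wtake]; rfl
    | succ n =>
      simp only [Walk.length_cons] at h
      simp only [wtake, Walk.support_cons, List.take_succ_cons]
      exact congrArg (List.cons _) (ih (n := n) (by omega))

lemma support_wdrop {u v : V} (p : G.Walk u v) {n : ℕ} (h : n ≤ p.length) :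
    (p.wdrop n).support = p.support.drop n := by
  induction p generalizing n with
  | nil => simp at h; simp [h, wdrop]
  | cons hadj q ih =>
    cases n with
    | zero => simp [wdrop]; rfl
    | succ n =>
      simp only [Walk.length_cons] at h
      simp only [wdrop, Walk.support_cons, List.drop_succ_cons]
      exact ih (by omega)

lemma support_getElem {u v : V} (p : G.Walk u v) {n : ℕ} (h : n < p.support.length) :
    p.support[n] = p.getVert n := by
  induction p generalizing n with
  | nil =>
    simp only [Walk.support_nil, List.length_singleton] at h
    interval_cases n
    rfl
  | cons hadj q ih =>
    cases n with
    | zero => rfl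
    | succ n =>
      simp only [Walk.support_cons, List.length_cons] at h
      simpa [Walk.getVert_cons_succ] using ih (by simpa using h)

lemma getVert_injOn' {u v : V} {p : G.Walk u v} (hp : p.IsPath) {i j : ℕ}
    (hi : i ≤ p.length) (hj : j ≤ p.length) (h : p.getVert i = p.getVert j) : i = j := by
  have hl : p.support.length = p.length + 1 := p.length_support
  have hi' : i < p.support.length := by omega
  have hj' : j < p.support.length := by omega
  have hnd := (Walk.isPath_def _ |>.mp hp)
  rw [← support_getElem p hi', ← support_getElem p hj'] at h
  exact (List.Nodup.getElem_inj_iff hnd).mp h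

end SimpleGraph.Walk

namespace FiberKey
open SimpleGraph Walk
variable {V : Type} {G : SimpleGraph V}

lemma exists_hpath {s : Set V} {h1 h2 : s}
    (hc : (G.induce s).connectedComponentMk h1 = (G.induce s).connectedComponentMk h2) :
    ∃ W : G.Walk ↑h1 ↑h2, W.IsPath ∧ ∀ z ∈ W.support, z ∈ s := by
  classical
  obtain ⟨w⟩ := ConnectedComponent.exact hc
  let q := w.toPath
  refine ⟨(q : (G.induce s).Walk h1 h2).map (Embedding.induce (G := G) s).toHom, ?_, ?_⟩
  · exact Walk.map_isPath_of_injective (Embedding.induce (G := G) s).injective q.2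
  · intro z hz
    erw [Walk.support_map] at hz
    obtain ⟨a, _, rfl⟩ := List.mem_map.mp hz
    exact a.2

lemma perm_aux {α : Type*} (t w X : List α) : (t ++ (w ++ X)).Perm (w ++ (t ++ X)) := by
  simpa [List.append_assoc] using
    (List.perm_append_comm (l₁ := t) (l₂ := w)).append_right X
lemma keyA {x y : V} {p : G.Walk x y} (hp1 : p.IsPath)
    (hp2 : ∀ (q : G.Walk x y), q.IsPath → q.length ≤ p.length) {i : ℕ} (hi : i < p.length)
    {h1 h2 : {v : V | v ∉ p.support}}
    (hc : (G.induce {v : V | v ∉ p.support}).connectedComponentMk h1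
        = (G.induce {v : V | v ∉ p.support}).connectedComponentMk h2)
    (ha1 : G.Adj ↑h1 (p.getVert i)) (ha2 : G.Adj ↑h2 (p.getVert (i+1))) : False := by
  obtain ⟨W, hWp, hWs⟩ := exists_hpath hc
  set N : G.Walk x y :=
    (p.wtake i).append (Walk.cons ha1.symm (W.append (Walk.cons ha2 (p.wdrop (i+1)))))
    with hN
  have hNlen : N.length = p.length + W.length + 1 := by
    rw [hN]
    simp only [Walk.length_append, Walk.length_cons, length_wtake p hi.le, length_wdrop]
    omega
  have hNsup : N.support = p.support.take (i+1) ++ (W.support ++ p.support.drop (i+1)) := by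
    rw [hN]
    simp only [Walk.support_append, Walk.support_cons, List.tail_cons,
      support_wtake p hi.le, support_wdrop p (by omega : i+1 ≤ p.length)]
  have hperm : N.support.Perm (W.support ++ p.support) := by
    rw [hNsup]
    generalize W.support = L
    conv_rhs => rw [← List.take_append_drop (i+1) p.support]
    exact perm_aux _ _ _
  have hNodup : (W.support ++ p.support).Nodup := by
    rw [List.nodup_append]
    exact ⟨hWp.support_nodup, hp1.support_nodup, fun a haW b hb hab => hWs a haW (by subst hab; exact hb)⟩
  have hNpath : N.IsPath := by
    rw [Walk.isPath_def]
    exact hperm.nodup_iff.mpr hNodup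
  have := hp2 N hNpath
  omega

lemma keyB {x y : V} {p : G.Walk x y} (hp1 : p.IsPath)
    (hp2 : ∀ (q : G.Walk x y), q.IsPath → q.length ≤ p.length) {i j : ℕ}
    (hij : i < j) (hj : j < p.length)
    {h1 h2 : {v : V | v ∉ p.support}}
    (hc : (G.induce {v : V | v ∉ p.support}).connectedComponentMk h1
        = (G.induce {v : V | v ∉ p.support}).connectedComponentMk h2)
    (ha1 : G.Adj ↑h1 (p.getVert i)) (ha2 : G.Adj ↑h2 (p.getVert j))
    (hab : G.Adj (p.getVert (i+1)) (p.getVert (j+1))) : False := by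
  obtain ⟨W, hWp, hWs⟩ := exists_hpath hc
  have hiL : i < p.length := lt_trans hij hj
  have hMend : (p.wdrop (i+1)).getVert (j - (i+1)) = p.getVert j := by
    rw [getVert_wdrop]; congr 1; omega
  set M : G.Walk (p.getVert (i+1)) (p.getVert j) :=
    ((p.wdrop (i+1)).wtake (j - (i+1))).copy rfl hMend with hM
  set N : G.Walk x y :=
    (p.wtake i).append (Walk.cons ha1.symm (W.append (Walk.cons ha2
      (M.reverse.append (Walk.cons hab (p.wdrop (j+1)))))))
    with hN
  have hMlen : M.length = j - (i+1) := by
    rw [hM, Walk.length_copy]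
    exact length_wtake _ (by rw [length_wdrop]; omega)
  have hMsup : M.support = (p.support.drop (i+1)).take (j - i) := by
    rw [hM, Walk.support_copy,
      support_wtake _ (by rw [length_wdrop]; omega : j - (i+1) ≤ (p.wdrop (i+1)).length),
      support_wdrop p (by omega : i+1 ≤ p.length)]
    congr 1
    omega
  have hNlen : N.length = p.length + W.length + 1 := by
    rw [hN]
    simp only [Walk.length_append, Walk.length_cons, Walk.length_reverse,
      length_wtake p hiL.le, length_wdrop, hMlen]
    omega
  have hNsup : N.support = p.support.take (i+1) ++ (W.support ++
      (M.support.reverse ++ p.support.drop (j+1))) := by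
    rw [hN]
    simp only [Walk.support_append, Walk.support_cons, List.tail_cons, Walk.support_reverse,
      support_wtake p hiL.le, support_wdrop p (by omega : j+1 ≤ p.length)]
  have hperm : N.support.Perm (W.support ++ p.support) := by
    rw [hNsup, hMsup]
    have hps : p.support = p.support.take (i+1) ++
        ((p.support.drop (i+1)).take (j - i) ++ p.support.drop (j+1)) := by
      conv_lhs => rw [← List.take_append_drop (i+1) p.support]
      congr 1
      conv_lhs => rw [← List.take_append_drop (j - i) (p.support.drop (i+1))]
      congr 1
      rw [List.drop_drop]
      congr 1
      omega
    generalize W.support = L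
    conv_rhs => rw [hps]
    refine List.Perm.trans ?_ (perm_aux _ _ _)
    exact (((List.reverse_perm _).append_right _).append_left _).append_left _
  have hNodup : (W.support ++ p.support).Nodup := by
    rw [List.nodup_append]
    exact ⟨hWp.support_nodup, hp1.support_nodup, fun a haW b hb hab => hWs a haW (by subst hab; exact hb)⟩
  have hNpath : N.IsPath := by
    rw [Walk.isPath_def]
    exact hperm.nodup_iff.mpr hNodup
  have := hp2 N hNpath
  omega


end FiberKey

open SimpleGraph

/-- `p` is an `xy`-fiber of `G`: a longest path among all paths with endpoints `x`
and `y`. -/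
def IsXYFiber {V : Type} (G : SimpleGraph V) {x y : V} (p : G.Walk x y) : Prop :=
  p.IsPath ∧ ∀ (q : G.Walk x y), q.IsPath → q.length ≤ p.length

/-- The attachment points on `p` of the component `C` of `G - V(p)`: the vertices of
`p` having a neighbor in `C`. -/
def attachPoints {V : Type} (G : SimpleGraph V) {x y : V} (p : G.Walk x y)
    (C : (G.induce {v : V | v ∉ p.support}).ConnectedComponent) : Set V :=
  {s : V | s ∈ p.support ∧ ∃ h : {v : V | v ∉ p.support},
    (G.induce {v : V | v ∉ p.support}).connectedComponentMk h = C ∧ G.Adj ↑h s}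

/-- If `P` is an `xy`-fiber in `G` and `H` is a component of `G - V(P)` with `k`
attachment points, then there is an independent set `A ⊆ V(P) - {x, y}` with
`|A| ≥ k - 1` and no edge between `A` and `H`. -/
theorem indep_set_of_xy_fiber
    {V : Type} [Fintype V] (G : SimpleGraph V) {x y : V}
    (p : G.Walk x y) (hp : IsXYFiber G p)
    (C : (G.induce {v : V | v ∉ p.support}).ConnectedComponent) :
    ∃ A : Finset V,
      (∀ a ∈ A, ∀ b ∈ A, a ≠ b → ¬ G.Adj a b) ∧
      (∀ a ∈ A, a ∈ p.support ∧ a ≠ x ∧ a ≠ y) ∧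
      (attachPoints G p C).ncard - 1 ≤ A.card ∧
      (∀ a ∈ A, ∀ h : {v : V | v ∉ p.support},
        (G.induce {v : V | v ∉ p.support}).connectedComponentMk h = C → ¬ G.Adj a ↑h) := by
  classical
  obtain ⟨hp1, hp2⟩ := hp
  have hfin : (attachPoints G p C).Finite := Set.toFinite _
  set T : Finset V := hfin.toFinset with hTdef
  have hT : ∀ u, u ∈ T ↔ u ∈ attachPoints G p C := fun u => hfin.mem_toFinset
  have hatt : ∀ u ∈ T, u ∈ p.support ∧ ∃ h : {v : V | v ∉ p.support},
      (G.induce {v : V | v ∉ p.support}).connectedComponentMk h = C ∧ G.Adj ↑h u := by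
    intro u hu
    exact (hT u).mp hu
  have hncard : (attachPoints G p C).ncard = T.card :=
    Set.ncard_eq_toFinset_card _ hfin
  rcases Finset.eq_empty_or_nonempty T with hTe | hTne
  · refine ⟨∅, by simp, by simp, ?_, by simp⟩
    simp [hncard, hTe]
  -- index function along the path
  set ι : V → ℕ := fun u =>
    if h : ∃ n, p.getVert n = u ∧ n ≤ p.length then Nat.find h else 0 with hιdef
  have hι : ∀ u ∈ p.support, p.getVert (ι u) = u ∧ ι u ≤ p.length := by
    intro u hu
    have h := Walk.mem_support_iff_exists_getVert.mp hu
    simp only [hιdef, dif_pos h]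
    exact Nat.find_spec h
  obtain ⟨m, hmT, hmax⟩ := T.exists_max_image ι hTne
  have hmlen : ι m ≤ p.length := (hι m (hatt m hmT).1).2
  -- facts about elements of `T.erase m`
  have hlt : ∀ u ∈ T.erase m, ι u < ι m := by
    intro u hu
    have huT := Finset.mem_of_mem_erase hu
    have hune := Finset.ne_of_mem_erase hu
    have hle := hmax u huT
    rcases lt_or_eq_of_le hle with h | h
    · exact h
    · exfalso
      apply hune
      rw [← (hι u (hatt u huT).1).1, ← (hι m (hatt m hmT).1).1, h]
  have hbound : ∀ u ∈ T.erase m, ι u + 1 ≤ p.length := by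
    intro u hu
    have := hlt u hu
    omega
  -- the key non-adjacency fact: the successor of an attachment point is not
  -- adjacent to the component C
  have hkeyA : ∀ u ∈ T.erase m, ∀ h2 : {v : V | v ∉ p.support},
      (G.induce {v : V | v ∉ p.support}).connectedComponentMk h2 = C →
      ¬ G.Adj (p.getVert (ι u + 1)) ↑h2 := by
    intro u hu h2 hc2 hadj
    have huT := Finset.mem_of_mem_erase hu
    obtain ⟨hsup, h1, hc1, hadj1⟩ := hatt u huT
    have hieq : p.getVert (ι u) = u := (hι u hsup).1
    exact FiberKey.keyA hp1 hp2 (by have := hlt u hu; omega)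
      (hc1.trans hc2.symm) (by rw [hieq]; exact hadj1) hadj.symm
  refine ⟨(T.erase m).image (fun u => p.getVert (ι u + 1)), ?_, ?_, ?_, ?_⟩
  · -- independence
    have key : ∀ u ∈ T.erase m, ∀ v ∈ T.erase m, ι u < ι v →
        ¬ G.Adj (p.getVert (ι u + 1)) (p.getVert (ι v + 1)) := by
      intro u hu v hv hij hadj
      have huT := Finset.mem_of_mem_erase hu
      have hvT := Finset.mem_of_mem_erase hv
      obtain ⟨hsupu, h1, hc1, hadj1⟩ := hatt u huT
      obtain ⟨hsupv, h2, hc2, hadj2⟩ := hatt v hvT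
      have hiequ : p.getVert (ι u) = u := (hι u hsupu).1
      have hieqv : p.getVert (ι v) = v := (hι v hsupv).1
      exact FiberKey.keyB hp1 hp2 hij (by have := hlt v hv; omega)
        (hc1.trans hc2.symm) (by rw [hiequ]; exact hadj1) (by rw [hieqv]; exact hadj2) hadj
    intro a ha b hb hab hadj
    obtain ⟨u, hu, rfl⟩ := Finset.mem_image.mp ha
    obtain ⟨v, hv, rfl⟩ := Finset.mem_image.mp hb
    rcases lt_trichotomy (ι u) (ι v) with h | h | h
    · exact key u hu v hv h hadj
    · exact hab (by rw [h])
    · exact key v hv u hu h hadj.symm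
  · -- membership / not endpoints
    intro a ha
    obtain ⟨u, hu, rfl⟩ := Finset.mem_image.mp ha
    have hb := hbound u hu
    refine ⟨Walk.mem_support_iff_exists_getVert.mpr ⟨ι u + 1, rfl, hb⟩, ?_, ?_⟩
    · intro hax
      have : p.getVert (ι u + 1) = p.getVert 0 := by rw [hax, Walk.getVert_zero]
      have := Walk.getVert_injOn' hp1 hb (by omega) this
      omega
    · intro hay
      have : p.getVert (ι u + 1) = p.getVert p.length := by
        rw [hay, Walk.getVert_length]
      have hlen : ι u + 1 = p.length := Walk.getVert_injOn' hp1 hb le_rfl this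
      -- then `ι m = p.length`, so `m = y` is an attachment adjacent to C,
      -- contradicting `hkeyA`-style reasoning
      have hmeq : ι m = p.length := by have := hlt u hu; omega
      obtain ⟨hsupm, h2, hc2, hadj2⟩ := hatt m hmT
      have : p.getVert (ι m) = m := (hι m hsupm).1
      have hm_eq : m = p.getVert (ι u + 1) := by
        rw [hlen, ← hmeq, this]
      exact hkeyA u hu h2 hc2 (by rw [← hm_eq]; exact hadj2.symm)
  · -- cardinality
    rw [hncard]
    have hinj : Set.InjOn (fun u => p.getVert (ι u + 1)) (T.erase m) := by
      intro u hu v hv h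
      have hequ := Walk.getVert_injOn' hp1 (hbound u hu) (hbound v hv) h
      have : ι u = ι v := by omega
      have huT := Finset.mem_of_mem_erase hu
      have hvT := Finset.mem_of_mem_erase hv
      rw [← (hι u (hatt u huT).1).1, ← (hι v (hatt v hvT).1).1, this]
    rw [Finset.card_image_of_injOn hinj, Finset.card_erase_of_mem hmT]
  · -- no adjacency to the component
    intro a ha h2 hc2 hadj
    obtain ⟨u, hu, rfl⟩ := Finset.mem_image.mp ha
    exact hkeyA u hu h2 hc2 hadj
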